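/- Let e, f be two edges of H with b, e5 ∈ H_{ef} (where b = {v9,v1,v2,v3,v4} and e5 = {v5,v6,v7,v8,v9}), and let φ be a monomorphism from H_{ef} into H. Then φ(v9) = v9. -/

import Mathlib

open Finset

/-- Edge r = {z, v1, v3, v5, v8} (z is vertex 0, vᵢ is vertex i). -/
def er : Finset (Fin 10) := {0, 1, 3, 5, 8}
/-- Edge g = {z, v2, v4, v7, v9}. -/
def eg : Finset (Fin 10) := {0, 2, 4, 7, 9}
/-- Edge a = {v1, v4, v6, v8, v9}. -/
def ea : Finset (Fin 10) := {1, 4, 6, 8, 9}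
/-- Edge b = {v9, v1, v2, v3, v4}. -/
def eb : Finset (Fin 10) := {9, 1, 2, 3, 4}
def ee1 : Finset (Fin 10) := {1, 2, 3, 4, 5}
def ee2 : Finset (Fin 10) := {2, 3, 4, 5, 6}
def ee3 : Finset (Fin 10) := {3, 4, 5, 6, 7}
def ee4 : Finset (Fin 10) := {4, 5, 6, 7, 8}
def ee5 : Finset (Fin 10) := {5, 6, 7, 8, 9}

/-- The edge set of the 5-uniform hypergraph H. -/
def Hedges : Finset (Finset (Fin 10)) := {er, eg, ea, eb, ee1, ee2, ee3, ee4, ee5}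

/-- Degree of a vertex with respect to an edge set. -/
def deg (E : Finset (Finset (Fin 10))) (x : Fin 10) : ℕ :=
  (E.filter (fun s => x ∈ s)).card

set_option maxRecDepth 10000

lemma hgmem : eg ∈ Hedges := by simp [Hedges]
lemma hamem : ea ∈ Hedges := by simp [Hedges]
lemma h2mem : ee2 ∈ Hedges := by simp [Hedges]
lemma h3mem : ee3 ∈ Hedges := by simp [Hedges]
lemma h4mem : ee4 ∈ Hedges := by simp [Hedges]

lemma memH {X : Finset (Fin 10)} (hX : X ∈ Hedges) :
    X = er ∨ X = eg ∨ X = ea ∨ X = eb ∨ X = ee1 ∨ X = ee2 ∨ X = ee3 ∨ X = ee4 ∨ X = ee5 := by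
  simpa [Hedges, Finset.mem_insert] using hX

lemma classify : ∀ X ∈ Hedges, ∀ Y ∈ Hedges, ∀ c : Fin 10, X ∩ Y = {c} →
    c = 9 ∨
    (c = 0 ∧ ((X = er ∧ Y = eg) ∨ (X = eg ∧ Y = er))) ∨
    (c = 4 ∧ ((X = eb ∧ Y = ee4) ∨ (X = ee4 ∧ Y = eb))) ∨
    (c = 5 ∧ ((X = ee1 ∧ Y = ee5) ∨ (X = ee5 ∧ Y = ee1))) := by
  intro X hX Y hY
  rcases memH hX with rfl|rfl|rfl|rfl|rfl|rfl|rfl|rfl|rfl <;>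
    rcases memH hY with rfl|rfl|rfl|rfl|rfl|rfl|rfl|rfl|rfl <;> decide

/-- counting lemma: edges avoiding x map injectively to edges avoiding φ x -/
lemma countL (φ : Fin 10 → Fin 10) (hφ : Function.Injective φ) (S : Finset (Finset (Fin 10)))
    (himg : ∀ s ∈ S, s.image φ ∈ Hedges) (x : Fin 10) :
    (S.filter (fun s => x ∉ s)).card ≤ (Hedges.filter (fun t => φ x ∉ t)).card := by
  apply Finset.card_le_card_of_injOn (fun s => s.image φ)
  · intro s hs
    simp only [Finset.coe_filter, Finset.mem_coe, Finset.mem_filter, Set.mem_setOf_eq] at hs ⊢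
    refine ⟨himg s hs.1, fun hmem => hs.2 ?_⟩
    obtain ⟨y, hy, hyx⟩ := Finset.mem_image.mp hmem
    rwa [← hφ hyx]
  · intro s _ t _ h
    exact Finset.image_injective hφ h

lemma lowerL (e f : Finset (Fin 10)) (p : Finset (Fin 10) → Prop) [DecidablePred p] :
    (Hedges.filter p).card ≤ ((Hedges \ {e, f}).filter p).card + 2 := by
  have heq : (Hedges \ {e, f}).filter p = (Hedges.filter p) \ {e, f} := by
    ext s
    simp only [Finset.mem_sdiff, Finset.mem_filter]
    tauto
  rw [heq]
  have h1 := Finset.card_le_card_sdiff_add_card (s := Hedges.filter p) (t := ({e, f} : Finset _))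
  have h2 : ({e, f} : Finset (Finset (Fin 10))).card ≤ 2 :=
    le_trans (Finset.card_insert_le _ _) (by simp)
  omega

-- uniqueness lemmas for case c = 5
lemma uniqXg : ∀ X ∈ Hedges, X ≠ ee1 → X ≠ ee5 → (5:Fin 10) ∈ X →
    (X ∩ ee1).card = 3 → (X ∩ ee5).card = 2 → X = er := by
  intro X hX
  rcases memH hX with rfl|rfl|rfl|rfl|rfl|rfl|rfl|rfl|rfl <;> decide

lemma uniqXa : ∀ X ∈ Hedges, X ≠ ee1 → X ≠ ee5 → X ≠ er → (5:Fin 10) ∈ X →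
    (X ∩ ee1).card = 3 → (X ∩ ee5).card = 3 → (X ∩ er).card = 2 → X = ee3 := by
  intro X hX
  rcases memH hX with rfl|rfl|rfl|rfl|rfl|rfl|rfl|rfl|rfl <;> decide

lemma uniqNone : ∀ X ∈ Hedges, X ≠ ee5 → X ≠ ee1 → (5:Fin 10) ∈ X →
    (X ∩ ee5).card = 3 → (X ∩ ee1).card = 2 → False := by
  intro X hX
  rcases memH hX with rfl|rfl|rfl|rfl|rfl|rfl|rfl|rfl|rfl <;> decide

lemma uniqB : ∀ X ∈ Hedges, (1:Fin 10) ∈ X → (2:Fin 10) ∈ X → (9:Fin 10) ∈ X → X = eb := by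
  intro X hX
  rcases memH hX with rfl|rfl|rfl|rfl|rfl|rfl|rfl|rfl|rfl <;> decide

lemma no28 : ∀ X ∈ Hedges, (2:Fin 10) ∈ X → (8:Fin 10) ∈ X → False := by
  intro X hX
  rcases memH hX with rfl|rfl|rfl|rfl|rfl|rfl|rfl|rfl|rfl <;> decide

lemma no389 : ∀ X ∈ Hedges, (3:Fin 10) ∈ X → (8:Fin 10) ∈ X → (9:Fin 10) ∈ X → False := by
  intro X hX
  rcases memH hX with rfl|rfl|rfl|rfl|rfl|rfl|rfl|rfl|rfl <;> decide

set_option maxHeartbeats 4000000 in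
theorem stmt15 (e f : Finset (Fin 10)) (he : e ∈ Hedges) (hf : f ∈ Hedges)
    (φ : Fin 10 → Fin 10) (hφ : Function.Injective φ)
    (hmono : ∀ s ∈ Hedges \ {e, f}, s.image φ ∈ Hedges)
    (hb : eb ∈ Hedges \ {e, f}) (he5 : ee5 ∈ Hedges \ {e, f}) :
    φ 9 = 9 := by
  have hB : eb.image φ ∈ Hedges := hmono eb hb
  have hE : ee5.image φ ∈ Hedges := hmono ee5 he5
  have hne : ∀ i j : Fin 10, i ≠ j → φ i ≠ φ j := fun i j h hh => h (hφ hh)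
  have hint : eb.image φ ∩ ee5.image φ = {φ 9} := by
    rw [← Finset.image_inter _ _ hφ, show eb ∩ ee5 = ({9} : Finset (Fin 10)) by decide,
      Finset.image_singleton]
  rcases classify _ hB _ hE (φ 9) hint with h9 | ⟨hc0, hor⟩ | ⟨hc4, hor⟩ | ⟨hc5, hor⟩
  · exact h9
  · -- case φ 9 = 0 : derive φ 0 = 6, then counting contradiction
    exfalso
    have hU : (eb ∪ ee5).image φ = er ∪ eg := by
      rw [Finset.image_union]
      rcases hor with ⟨h1, h2⟩ | ⟨h1, h2⟩ <;> rw [h1, h2]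
      exact Finset.union_comm _ _
    have h06 : φ 0 = 6 := by
      obtain ⟨x, hx⟩ := (Finite.injective_iff_bijective.mp hφ).surjective 6
      by_cases hx0 : x = 0
      · rw [hx0] at hx; exact hx
      · exfalso
        have hall : ∀ y : Fin 10, y ≠ 0 → y ∈ eb ∪ ee5 := by decide
        have h6 : (6 : Fin 10) ∈ (eb ∪ ee5).image φ :=
          hx ▸ Finset.mem_image_of_mem φ (hall x hx0)
        rw [hU] at h6
        exact absurd h6 (by decide)
    have hle := countL φ hφ _ hmono 0
    rw [h06] at hle
    have hge := lowerL e f (fun s => (0:Fin 10) ∉ s)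
    have c1 : (Hedges.filter (fun s => (0:Fin 10) ∉ s)).card = 7 := by rfl
    have c2 : (Hedges.filter (fun t => (6:Fin 10) ∉ t)).card = 4 := by rfl
    omega
  · -- case φ 9 = 4 : counting contradiction
    exfalso
    have hle := countL φ hφ _ hmono 9
    rw [hc4] at hle
    have hge := lowerL e f (fun s => (9:Fin 10) ∉ s)
    have c1 : (Hedges.filter (fun s => (9:Fin 10) ∉ s)).card = 5 := by rfl
    have c2 : (Hedges.filter (fun t => (4:Fin 10) ∉ t)).card = 2 := by rfl
    omega
  · -- case φ 9 = 5
    exfalso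
    have hle := countL φ hφ _ hmono 9
    rw [hc5] at hle
    have hge := lowerL e f (fun s => (9:Fin 10) ∉ s)
    have c1 : (Hedges.filter (fun s => (9:Fin 10) ∉ s)).card = 5 := by rfl
    have c2 : (Hedges.filter (fun t => (5:Fin 10) ∉ t)).card = 3 := by rfl
    have heqS : (Hedges \ {e, f}).filter (fun s => (9:Fin 10) ∉ s)
        = (Hedges.filter (fun s => (9:Fin 10) ∉ s)) \ {e, f} := by
      ext s
      simp only [Finset.mem_sdiff, Finset.mem_filter]
      exact ⟨fun h => ⟨⟨h.1.1, h.2⟩, h.1.2⟩, fun h => ⟨⟨h.1.1, h.2⟩, h.1.2⟩⟩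
    rw [heqS] at hle
    have h1 := Finset.card_sdiff_add_card_inter (Hedges.filter (fun s => (9:Fin 10) ∉ s)) ({e, f} : Finset _)
    have hpair : ({e, f} : Finset (Finset (Fin 10))).card ≤ 2 :=
      le_trans (Finset.card_insert_le _ _) (by simp)
    have hintercard : ((Hedges.filter (fun s => (9:Fin 10) ∉ s)) ∩ ({e, f} : Finset _)).card ≥ 2 := by omega
    have hinter : (Hedges.filter (fun s => (9:Fin 10) ∉ s)) ∩ ({e, f} : Finset _) = {e, f} :=
      Finset.eq_of_subset_of_card_le Finset.inter_subset_right (by omega)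
    have heF : e ∈ (Hedges.filter (fun s => (9:Fin 10) ∉ s)) := by
      have hmem : e ∈ ({e, f} : Finset (Finset (Fin 10))) := by simp
      rw [← hinter] at hmem
      exact (Finset.mem_inter.mp hmem).1
    have hfF : f ∈ (Hedges.filter (fun s => (9:Fin 10) ∉ s)) := by
      have hmem : f ∈ ({e, f} : Finset (Finset (Fin 10))) := by simp
      rw [← hinter] at hmem
      exact (Finset.mem_inter.mp hmem).1
    have hef : e ≠ f := by
      intro h
      rw [h, Finset.pair_eq_singleton] at hintercard
      have hle1 : ((Hedges.filter (fun s => (9:Fin 10) ∉ s)) ∩ ({f} : Finset _)).card ≤ ({f} : Finset _).card :=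
        Finset.card_le_card Finset.inter_subset_right
      rw [Finset.card_singleton] at hle1
      omega
    have h9e : (9 : Fin 10) ∉ e := (Finset.mem_filter.mp heF).2
    have h9f : (9 : Fin 10) ∉ f := (Finset.mem_filter.mp hfF).2
    -- g and a survive
    have hgS : eg ∈ Hedges \ {e, f} := by
      simp only [Finset.mem_sdiff, Finset.mem_insert, Finset.mem_singleton]
      refine ⟨hgmem, ?_⟩
      rintro (rfl | rfl)
      · exact h9e (by decide)
      · exact h9f (by decide)
    have haS : ea ∈ Hedges \ {e, f} := by
      simp only [Finset.mem_sdiff, Finset.mem_insert, Finset.mem_singleton]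
      refine ⟨hamem, ?_⟩
      rintro (rfl | rfl)
      · exact h9e (by decide)
      · exact h9f (by decide)
    have hXg : eg.image φ ∈ Hedges := hmono _ hgS
    have hXa : ea.image φ ∈ Hedges := hmono _ haS
    have h5g : (5 : Fin 10) ∈ eg.image φ := hc5 ▸ Finset.mem_image_of_mem φ (by decide : (9:Fin 10) ∈ eg)
    have h5a : (5 : Fin 10) ∈ ea.image φ := hc5 ▸ Finset.mem_image_of_mem φ (by decide : (9:Fin 10) ∈ ea)
    have imgne : ∀ s t : Finset (Fin 10), s ≠ t → s.image φ ≠ t.image φ :=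
      fun s t h hh => h (Finset.image_injective hφ hh)
    have cgb : (eg.image φ ∩ eb.image φ).card = 3 := by
      rw [← Finset.image_inter _ _ hφ, Finset.card_image_of_injective _ hφ]; rfl
    have cge5 : (eg.image φ ∩ ee5.image φ).card = 2 := by
      rw [← Finset.image_inter _ _ hφ, Finset.card_image_of_injective _ hφ]; rfl
    have cab : (ea.image φ ∩ eb.image φ).card = 3 := by
      rw [← Finset.image_inter _ _ hφ, Finset.card_image_of_injective _ hφ]; rfl
    have cae5 : (ea.image φ ∩ ee5.image φ).card = 3 := by
      rw [← Finset.image_inter _ _ hφ, Finset.card_image_of_injective _ hφ]; rfl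
    have cag : (ea.image φ ∩ eg.image φ).card = 2 := by
      rw [← Finset.image_inter _ _ hφ, Finset.card_image_of_injective _ hφ]; rfl
    rcases hor with ⟨hb1, he1⟩ | ⟨hb1, he1⟩
    · -- orientation 1 : φ(b) = e1, φ(e5) = e5
      rw [hb1] at cgb cab
      rw [he1] at cge5 cae5
      have hXgr : eg.image φ = er :=
        uniqXg _ hXg (hb1 ▸ imgne eg eb (by decide)) (he1 ▸ imgne eg ee5 (by decide)) h5g cgb cge5
      rw [hXgr] at cag
      have hXar : ea.image φ = ee3 :=
        uniqXa _ hXa (hb1 ▸ imgne ea eb (by decide)) (he1 ▸ imgne ea ee5 (by decide))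
          (hXgr ▸ imgne ea eg (by decide)) h5a cab cae5 cag
      -- pointwise memberships
      have m4g : φ 4 ∈ er := hXgr ▸ Finset.mem_image_of_mem φ (by decide : (4:Fin 10) ∈ eg)
      have m4a : φ 4 ∈ ee3 := hXar ▸ Finset.mem_image_of_mem φ (by decide : (4:Fin 10) ∈ ea)
      have m1a : φ 1 ∈ ee3 := hXar ▸ Finset.mem_image_of_mem φ (by decide : (1:Fin 10) ∈ ea)
      have m1b : φ 1 ∈ ee1 := hb1 ▸ Finset.mem_image_of_mem φ (by decide : (1:Fin 10) ∈ eb)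
      have m7g : φ 7 ∈ er := hXgr ▸ Finset.mem_image_of_mem φ (by decide : (7:Fin 10) ∈ eg)
      have m7e : φ 7 ∈ ee5 := he1 ▸ Finset.mem_image_of_mem φ (by decide : (7:Fin 10) ∈ ee5)
      have m2g : φ 2 ∈ er := hXgr ▸ Finset.mem_image_of_mem φ (by decide : (2:Fin 10) ∈ eg)
      have m2b : φ 2 ∈ ee1 := hb1 ▸ Finset.mem_image_of_mem φ (by decide : (2:Fin 10) ∈ eb)
      have m3b : φ 3 ∈ ee1 := hb1 ▸ Finset.mem_image_of_mem φ (by decide : (3:Fin 10) ∈ eb)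
      have m5e : φ 5 ∈ ee5 := he1 ▸ Finset.mem_image_of_mem φ (by decide : (5:Fin 10) ∈ ee5)
      have m6a : φ 6 ∈ ee3 := hXar ▸ Finset.mem_image_of_mem φ (by decide : (6:Fin 10) ∈ ea)
      have m6e : φ 6 ∈ ee5 := he1 ▸ Finset.mem_image_of_mem φ (by decide : (6:Fin 10) ∈ ee5)
      have m8a : φ 8 ∈ ee3 := hXar ▸ Finset.mem_image_of_mem φ (by decide : (8:Fin 10) ∈ ea)
      have m8e : φ 8 ∈ ee5 := he1 ▸ Finset.mem_image_of_mem φ (by decide : (8:Fin 10) ∈ ee5)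
      -- solve values
      have h4v : φ 4 = 3 := by
        have h := Finset.mem_inter.mpr ⟨m4g, m4a⟩
        rw [show er ∩ ee3 = ({3, 5} : Finset (Fin 10)) by decide] at h
        have hn : φ 4 ≠ 5 := hc5 ▸ hne 4 9 (by decide)
        simp only [Finset.mem_insert, Finset.mem_singleton] at h
        rcases h with h | h
        · exact h
        · exact absurd h hn
      have h1v : φ 1 = 4 := by
        have h := Finset.mem_inter.mpr ⟨m1a, m1b⟩
        rw [show ee3 ∩ ee1 = ({3, 4, 5} : Finset (Fin 10)) by decide] at h
        have hn1 : φ 1 ≠ 5 := hc5 ▸ hne 1 9 (by decide)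
        have hn2 : φ 1 ≠ 3 := h4v ▸ hne 1 4 (by decide)
        simp only [Finset.mem_insert, Finset.mem_singleton] at h
        rcases h with h | h | h
        · exact absurd h hn2
        · exact h
        · exact absurd h hn1
      have h7v : φ 7 = 8 := by
        have h := Finset.mem_inter.mpr ⟨m7g, m7e⟩
        rw [show er ∩ ee5 = ({5, 8} : Finset (Fin 10)) by decide] at h
        have hn : φ 7 ≠ 5 := hc5 ▸ hne 7 9 (by decide)
        simp only [Finset.mem_insert, Finset.mem_singleton] at h
        rcases h with h | h
        · exact absurd h hn
        · exact h
      have h2v : φ 2 = 1 := by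
        have h := Finset.mem_inter.mpr ⟨m2g, m2b⟩
        rw [show er ∩ ee1 = ({1, 3, 5} : Finset (Fin 10)) by decide] at h
        have hn1 : φ 2 ≠ 5 := hc5 ▸ hne 2 9 (by decide)
        have hn2 : φ 2 ≠ 3 := h4v ▸ hne 2 4 (by decide)
        simp only [Finset.mem_insert, Finset.mem_singleton] at h
        rcases h with h | h | h
        · exact h
        · exact absurd h hn2
        · exact absurd h hn1
      have h3v : φ 3 = 2 := by
        have h := m3b
        rw [show ee1 = ({1, 2, 3, 4, 5} : Finset (Fin 10)) by decide] at h
        have hn1 : φ 3 ≠ 5 := hc5 ▸ hne 3 9 (by decide)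
        have hn2 : φ 3 ≠ 3 := h4v ▸ hne 3 4 (by decide)
        have hn3 : φ 3 ≠ 4 := h1v ▸ hne 3 1 (by decide)
        have hn4 : φ 3 ≠ 1 := h2v ▸ hne 3 2 (by decide)
        simp only [Finset.mem_insert, Finset.mem_singleton] at h
        rcases h with h | h | h | h | h
        · exact absurd h hn4
        · exact h
        · exact absurd h hn2
        · exact absurd h hn3
        · exact absurd h hn1
      have m6 : φ 6 = 6 ∨ φ 6 = 7 := by
        have h := Finset.mem_inter.mpr ⟨m6a, m6e⟩
        rw [show ee3 ∩ ee5 = ({5, 6, 7} : Finset (Fin 10)) by decide] at h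
        have hn : φ 6 ≠ 5 := hc5 ▸ hne 6 9 (by decide)
        simp only [Finset.mem_insert, Finset.mem_singleton] at h
        rcases h with h | h | h
        · exact absurd h hn
        · exact Or.inl h
        · exact Or.inr h
      have m8 : φ 8 = 6 ∨ φ 8 = 7 := by
        have h := Finset.mem_inter.mpr ⟨m8a, m8e⟩
        rw [show ee3 ∩ ee5 = ({5, 6, 7} : Finset (Fin 10)) by decide] at h
        have hn : φ 8 ≠ 5 := hc5 ▸ hne 8 9 (by decide)
        simp only [Finset.mem_insert, Finset.mem_singleton] at h
        rcases h with h | h | h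
        · exact absurd h hn
        · exact Or.inl h
        · exact Or.inr h
      have h5v : φ 5 = 9 := by
        have h := m5e
        rw [show ee5 = ({5, 6, 7, 8, 9} : Finset (Fin 10)) by decide] at h
        have hn1 : φ 5 ≠ 5 := hc5 ▸ hne 5 9 (by decide)
        have hn2 : φ 5 ≠ 8 := h7v ▸ hne 5 7 (by decide)
        have n56 : φ 5 ≠ φ 6 := hne 5 6 (by decide)
        have n58 : φ 5 ≠ φ 8 := hne 5 8 (by decide)
        have n68 : φ 6 ≠ φ 8 := hne 6 8 (by decide)
        simp only [Finset.mem_insert, Finset.mem_singleton] at h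
        rcases h with h | h | h | h | h
        · exact absurd h hn1
        · rcases m6 with h6 | h6
          · exact absurd (h.trans h6.symm) n56
          · rcases m8 with h8 | h8
            · exact absurd (h.trans h8.symm) n58
            · exact absurd (h6.trans h8.symm) n68
        · rcases m6 with h6 | h6
          · rcases m8 with h8 | h8
            · exact absurd (h6.trans h8.symm) n68
            · exact absurd (h.trans h8.symm) n58
          · exact absurd (h.trans h6.symm) n56
        · exact absurd h hn2
        · exact h
      -- pick a surviving edge among e2, e3, e4
      have hpick : ee2 ∉ ({e, f} : Finset _) ∨ ee3 ∉ ({e, f} : Finset _) ∨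
          ee4 ∉ ({e, f} : Finset _) := by
        by_contra hcon
        push_neg at hcon
        obtain ⟨p2, p3, p4⟩ := hcon
        have hsub : ({ee2, ee3, ee4} : Finset (Finset (Fin 10))) ⊆ {e, f} := by
          intro x hx
          simp only [Finset.mem_insert, Finset.mem_singleton] at hx
          rcases hx with rfl | rfl | rfl <;> assumption
        have hc3 : ({ee2, ee3, ee4} : Finset (Finset (Fin 10))).card = 3 := by rfl
        have := Finset.card_le_card hsub
        omega
      rcases hpick with hs | hs | hs
      · -- e2 survives; its image must be b, but 4 has no preimage in e2
        have hS2 : ee2 ∈ Hedges \ {e, f} := Finset.mem_sdiff.mpr ⟨h2mem, hs⟩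
        have hX2 := hmono _ hS2
        have i1 : (1 : Fin 10) ∈ ee2.image φ := h2v ▸ Finset.mem_image_of_mem φ (by decide : (2:Fin 10) ∈ ee2)
        have i2 : (2 : Fin 10) ∈ ee2.image φ := h3v ▸ Finset.mem_image_of_mem φ (by decide : (3:Fin 10) ∈ ee2)
        have i9 : (9 : Fin 10) ∈ ee2.image φ := h5v ▸ Finset.mem_image_of_mem φ (by decide : (5:Fin 10) ∈ ee2)
        have hXb2 : ee2.image φ = eb := uniqB _ hX2 i1 i2 i9
        have i4 : (4 : Fin 10) ∈ ee2.image φ := hXb2 ▸ (by decide : (4:Fin 10) ∈ eb)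
        obtain ⟨x, hx, hx4⟩ := Finset.mem_image.mp i4
        have hx' : x = 2 ∨ x = 3 ∨ x = 4 ∨ x = 5 ∨ x = 6 := by
          simpa [ee2, Finset.mem_insert] using hx
        rcases hx' with rfl | rfl | rfl | rfl | rfl
        · rw [h2v] at hx4; exact absurd hx4 (by decide)
        · rw [h3v] at hx4; exact absurd hx4 (by decide)
        · rw [h4v] at hx4; exact absurd hx4 (by decide)
        · rw [h5v] at hx4; exact absurd hx4 (by decide)
        · rcases m6 with h6 | h6 <;> rw [h6] at hx4 <;> exact absurd hx4 (by decide)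
      · -- e3 survives; its image contains 2 and 8: impossible
        have hS3 : ee3 ∈ Hedges \ {e, f} := Finset.mem_sdiff.mpr ⟨h3mem, hs⟩
        have hX3 := hmono _ hS3
        have i2 : (2 : Fin 10) ∈ ee3.image φ := h3v ▸ Finset.mem_image_of_mem φ (by decide : (3:Fin 10) ∈ ee3)
        have i8 : (8 : Fin 10) ∈ ee3.image φ := h7v ▸ Finset.mem_image_of_mem φ (by decide : (7:Fin 10) ∈ ee3)
        exact no28 _ hX3 i2 i8
      · -- e4 survives; its image contains 3, 8, 9: impossible
        have hS4 : ee4 ∈ Hedges \ {e, f} := Finset.mem_sdiff.mpr ⟨h4mem, hs⟩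
        have hX4 := hmono _ hS4
        have i3 : (3 : Fin 10) ∈ ee4.image φ := h4v ▸ Finset.mem_image_of_mem φ (by decide : (4:Fin 10) ∈ ee4)
        have i8 : (8 : Fin 10) ∈ ee4.image φ := h7v ▸ Finset.mem_image_of_mem φ (by decide : (7:Fin 10) ∈ ee4)
        have i9 : (9 : Fin 10) ∈ ee4.image φ := h5v ▸ Finset.mem_image_of_mem φ (by decide : (5:Fin 10) ∈ ee4)
        exact no389 _ hX4 i3 i8 i9
    · -- orientation 2 : φ(b) = e5, φ(e5) = e1 : no candidate for φ(g)
      rw [hb1] at cgb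
      rw [he1] at cge5
      exact uniqNone _ hXg (hb1 ▸ imgne eg eb (by decide)) (he1 ▸ imgne eg ee5 (by decide))
        h5g cgb cge5
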